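/- For prime p ≡ 1 (mod 8) with p > 5, the integer B₂(χ) = (1/p) ∑_{μ=1}^{p-1} μ² (μ|p) satisfies B₂(χ) ≡ 0 (mod 8), and for p ≡ 5 (mod 8) with p > 5 it satisfies B₂(χ) ≡ 4 (mod 8). -/

import Mathlib

private lemma modeq_sum {α : Type*} {s : Finset α} {f g : α → ℤ} {n : ℤ}
    (h : ∀ a ∈ s, f a ≡ g a [ZMOD n]) :
    (∑ a ∈ s, f a) ≡ (∑ a ∈ s, g a) [ZMOD n] := by
  unfold Int.ModEq
  rw [Finset.sum_int_mod s n f, Finset.sum_int_mod s n g]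
  exact congrArg (· % n) (Finset.sum_congr rfl h)

private lemma leg_congr (p : ℕ) [Fact p.Prime] {a b : ℤ}
    (h : (a : ZMod p) = (b : ZMod p)) : legendreSym p a = legendreSym p b := by
  unfold legendreSym
  rw [h]

private lemma sq_mod8 (μ : ℕ) :
    ((μ : ℤ)^2) ≡ (if μ % 2 = 1 then 1 else if μ % 4 = 2 then 4 else 0) [ZMOD 8] := by
  have h8 : (μ : ℤ) ≡ ((μ % 8 : ℕ) : ℤ) [ZMOD 8] := by
    unfold Int.ModEq; push_cast; omega
  have h2 : μ % 2 = (μ % 8) % 2 := by omega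
  have h4 : μ % 4 = (μ % 8) % 4 := by omega
  rw [h2, h4]
  have : μ % 8 = 0 ∨ μ % 8 = 1 ∨ μ % 8 = 2 ∨ μ % 8 = 3 ∨ μ % 8 = 4 ∨ μ % 8 = 5 ∨
      μ % 8 = 6 ∨ μ % 8 = 7 := by omega
  rcases this with h|h|h|h|h|h|h|h <;> rw [h] at h8 ⊢ <;> push_cast at h8 <;> norm_num <;>
    exact (h8.pow 2).trans (by decide)

private lemma term_cong (p : ℕ) [Fact p.Prime] (μ : ℕ) :
    (μ : ℤ)^2 * legendreSym p μ ≡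
      (if μ % 2 = 1 then (legendreSym p μ : ℤ) else 0)
      + 4 * (if μ % 4 = 2 then (legendreSym p μ : ℤ) else 0) [ZMOD 8] := by
  have h := (sq_mod8 μ).mul_right (legendreSym p μ : ℤ)
  refine h.trans (Int.ModEq.refl _ |>.trans ?_ )
  have : ((if μ % 2 = 1 then (1:ℤ) else if μ % 4 = 2 then 4 else 0) * legendreSym p μ)
      = (if μ % 2 = 1 then (legendreSym p μ : ℤ) else 0)
      + 4 * (if μ % 4 = 2 then (legendreSym p μ : ℤ) else 0) := by
    split_ifs with h1 h2 <;> first | omega | ring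
  rw [this]

private lemma total_sum_zero (p : ℕ) [Fact p.Prime] (h5 : 5 < p) :
    ∑ μ ∈ Finset.Icc 1 (p - 1), (legendreSym p μ : ℤ) = 0 := by
  have hIcc : Finset.Icc 1 (p - 1) = Finset.Ico 1 p := by
    rw [← Finset.Ico_add_one_right_eq_Icc]
    congr 1
    omega
  have hrange : ∑ μ ∈ Finset.range p, (legendreSym p μ : ℤ) = 0 := by
    have hbij : ∑ μ ∈ Finset.range p, (legendreSym p μ : ℤ)
        = ∑ a : ZMod p, quadraticChar (ZMod p) a := by
      refine Finset.sum_nbij' (fun μ : ℕ => (μ : ZMod p)) (fun a : ZMod p => a.val)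
        ?_ ?_ ?_ ?_ ?_
      · intro a _; exact Finset.mem_univ _
      · intro a _
        simp only [Finset.mem_range]
        exact ZMod.val_lt a
      · intro a ha
        simp only [Finset.mem_range] at ha
        exact ZMod.val_cast_of_lt ha
      · intro a _
        simp [ZMod.natCast_val, ZMod.cast_id]
      · intro a _
        unfold legendreSym
        push_cast
        rfl
    rw [hbij]
    exact quadraticChar_sum_zero (by rw [ZMod.ringChar_zmod_n]; omega)
  rw [hIcc]
  have h0 : ∑ μ ∈ Finset.Ico 0 p, (legendreSym p μ : ℤ)
      = legendreSym p ((0:ℕ) : ℤ) + ∑ μ ∈ Finset.Ico 1 p, (legendreSym p μ : ℤ) :=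
    Finset.sum_eq_sum_Ico_succ_bot (by omega) _
  rw [Finset.range_eq_Ico, h0] at hrange
  simpa using hrange

private lemma refl_leg (p : ℕ) [Fact p.Prime] (h4 : p % 4 = 1) {μ : ℕ}
    (h1 : 1 ≤ μ) (h2 : μ ≤ p - 1) :
    legendreSym p ((p - μ : ℕ) : ℤ) = legendreSym p (μ : ℤ) := by
  have hp5 : 2 ≤ p := (Fact.out : p.Prime).two_le
  have hcast : (((p - μ : ℕ) : ℤ) : ZMod p) = (((-1) * μ : ℤ) : ZMod p) := by
    have : ((p - μ : ℕ) : ℤ) = (p : ℤ) - μ := by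
      push_cast [Nat.cast_sub (by omega : μ ≤ p)]; ring
    rw [this]
    push_cast
    simp [ZMod.natCast_self]
  rw [leg_congr p hcast, legendreSym.mul, legendreSym.at_neg_one (by omega),
    ZMod.χ₄_nat_one_mod_four h4, one_mul]

private lemma odd_sum_zero (p : ℕ) [Fact p.Prime] (h5 : 5 < p) (h4 : p % 4 = 1) :
    ∑ μ ∈ Finset.Icc 1 (p - 1), (if μ % 2 = 1 then (legendreSym p μ : ℤ) else 0) = 0 := by
  have hodd : p % 2 = 1 := by omega
  have hAE : ∑ μ ∈ Finset.Icc 1 (p - 1), (if μ % 2 = 1 then (legendreSym p μ : ℤ) else 0)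
      = ∑ μ ∈ Finset.Icc 1 (p - 1), (if μ % 2 = 0 then (legendreSym p μ : ℤ) else 0) := by
    refine Finset.sum_nbij' (fun μ => p - μ) (fun μ => p - μ) ?_ ?_ ?_ ?_ ?_ <;>
      intro a ha <;> simp only [Finset.mem_Icc] at ha ⊢
    · omega
    · omega
    · omega
    · omega
    · have hleg := refl_leg p h4 ha.1 ha.2
      have hpar : (p - a) % 2 = 0 ↔ a % 2 = 1 := by omega
      by_cases h : a % 2 = 1
      · rw [if_pos h, if_pos (hpar.mpr h), hleg]
      · rw [if_neg h, if_neg (fun hc => h (hpar.mp hc))]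
  have hsum : ∑ μ ∈ Finset.Icc 1 (p - 1), (if μ % 2 = 1 then (legendreSym p μ : ℤ) else 0)
      + ∑ μ ∈ Finset.Icc 1 (p - 1), (if μ % 2 = 0 then (legendreSym p μ : ℤ) else 0)
      = ∑ μ ∈ Finset.Icc 1 (p - 1), (legendreSym p μ : ℤ) := by
    rw [← Finset.sum_add_distrib]
    refine Finset.sum_congr rfl fun μ _ => ?_
    by_cases h : μ % 2 = 1
    · rw [if_pos h, if_neg (by omega), add_zero]
    · rw [if_neg h, if_pos (by omega), zero_add]
  rw [total_sum_zero p h5] at hsum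
  omega

private lemma count_two_mod_four (p : ℕ) (h5 : 5 < p) (h4 : p % 4 = 1) :
    ((Finset.Icc 1 (p - 1)).filter (fun μ => μ % 4 = 2)).card = (p - 1) / 4 := by
  have himg : (Finset.Icc 1 (p - 1)).filter (fun μ => μ % 4 = 2)
      = (Finset.range ((p - 1) / 4)).image (fun k => 4 * k + 2) := by
    ext μ
    simp only [Finset.mem_filter, Finset.mem_Icc, Finset.mem_image, Finset.mem_range]
    constructor
    · rintro ⟨⟨ha, hb⟩, hc⟩
      exact ⟨(μ - 2) / 4, by omega, by omega⟩
    · rintro ⟨k, hk, rfl⟩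
      omega
  rw [himg, Finset.card_image_of_injective _ (fun a b h => by omega), Finset.card_range]

private lemma bsum_parity (p : ℕ) [Fact p.Prime] :
    (∑ μ ∈ Finset.Icc 1 (p - 1), (if μ % 4 = 2 then (legendreSym p μ : ℤ) else 0))
      ≡ (((Finset.Icc 1 (p - 1)).filter (fun μ => μ % 4 = 2)).card : ℤ) [ZMOD 2] := by
  rw [← Finset.sum_filter]
  have : ((((Finset.Icc 1 (p - 1)).filter (fun μ => μ % 4 = 2)).card : ℤ))
      = ∑ _μ ∈ (Finset.Icc 1 (p - 1)).filter (fun μ => μ % 4 = 2), (1 : ℤ) := by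
    simp
  rw [this]
  refine modeq_sum fun μ hμ => ?_
  simp only [Finset.mem_filter, Finset.mem_Icc] at hμ
  have hne : ((μ : ℤ) : ZMod p) ≠ 0 := by
    push_cast
    rw [Ne, ZMod.natCast_eq_zero_iff]
    have hp : p.Prime := Fact.out
    have := hp.two_le
    intro hdvd
    have := Nat.le_of_dvd (by omega) hdvd
    omega
  rcases legendreSym.eq_one_or_neg_one p hne with h | h <;> rw [h] <;> decide

theorem B2chi_mod_eight (p : ℕ) [Fact p.Prime] (h5 : 5 < p) (B : ℤ)
    (hB : (p : ℤ) * B = ∑ μ ∈ Finset.Icc 1 (p - 1), (μ : ℤ) ^ 2 * legendreSym p μ) :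
    (p % 8 = 1 → B % 8 = 0) ∧ (p % 8 = 5 → B % 8 = 4) := by
  have key : p % 4 = 1 → (8:ℤ) ∣ ((p % 8 : ℕ) : ℤ) * B - 4 * (((p - 1) / 4 : ℕ) : ℤ) := by
    intro h4
    set N : ℕ := (p - 1) / 4 with hN
    have hS : (∑ μ ∈ Finset.Icc 1 (p - 1), (μ : ℤ) ^ 2 * legendreSym p μ)
        ≡ (∑ μ ∈ Finset.Icc 1 (p - 1), (if μ % 2 = 1 then (legendreSym p μ : ℤ) else 0))
          + 4 * (∑ μ ∈ Finset.Icc 1 (p - 1), (if μ % 4 = 2 then (legendreSym p μ : ℤ) else 0))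
          [ZMOD 8] := by
      rw [Finset.mul_sum, ← Finset.sum_add_distrib]
      exact modeq_sum fun μ _ => term_cong p μ
    rw [odd_sum_zero p h5 h4, zero_add] at hS
    have hBpar := bsum_parity p
    rw [count_two_mod_four p h5 h4, ← hN] at hBpar
    obtain ⟨k, hk⟩ := hBpar.dvd
    have h48 : (8:ℤ) ∣ 4 * (N:ℤ)
        - 4 * (∑ μ ∈ Finset.Icc 1 (p - 1), (if μ % 4 = 2 then (legendreSym p μ : ℤ) else 0)) :=
      ⟨k, by linarith⟩
    have hfull : (8:ℤ) ∣ (p : ℤ) * B - 4 * (N:ℤ) := by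
      obtain ⟨m, hm⟩ := hS.dvd
      obtain ⟨l, hl⟩ := h48
      rw [hB]
      exact ⟨-m - l, by linarith⟩
    have hdecomp : (p : ℤ) = 8 * ((p / 8 : ℕ) : ℤ) + ((p % 8 : ℕ) : ℤ) := by
      push_cast
      omega
    obtain ⟨k2, hk2⟩ := hfull
    rw [hdecomp] at hk2
    exact ⟨k2 - ((p / 8 : ℕ) : ℤ) * B, by linarith⟩
  constructor <;> intro h8
  · have h2 := key (by omega)
    rw [h8] at h2
    have hNpar : ((p - 1) / 4) % 2 = 0 := by omega
    push_cast at h2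
    omega
  · have h2 := key (by omega)
    rw [h8] at h2
    have hNpar : ((p - 1) / 4) % 2 = 1 := by omega
    push_cast at h2
    omega
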